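/- With s_n : C_n(F) → C_{n+1}(F) defined by s_0 = 0 and s_n(a_0 ⊗ a_1 ⊗ … ⊗ a_n) = ∑_{J ⊆ X} (a_0·u_J) ⊗ u_J ⊗ a_1 ⊗ … ⊗ a_n for n ≥ 1, one has the ℓ¹-operator bound ‖s_n(ξ)‖₁ ≤ 5^{|X|}·‖ξ‖₁ for every n ≥ 0 and every ξ ∈ C_n(F). -/

import Mathlib

open Finsupp

/-- The power set `2^X` of `X`, regarded as a commutative monoid under
union, with identity the empty set (a unital semilattice). -/
def finsetUnionMonoid (X : Type*) [DecidableEq X] : CommMonoid (Finset X) where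
  mul := (· ∪ ·)
  one := ∅
  mul_assoc := Finset.union_assoc
  one_mul := Finset.empty_union
  mul_one := Finset.union_empty
  mul_comm := Finset.union_comm

attribute [local instance] finsetUnionMonoid

/-- The space of Hochschild `n`-chains of (the semigroup algebra of) `S`:
finitely supported `ℂ`-valued functions on `(n+1)`-tuples, with canonical basis
vectors `[x_0, …, x_n]` given by `Finsupp.single`.  It is identified with
`A ⊗ A^{⊗n}` via `[x_0, …, x_n] ↦ e_{x_0} ⊗ ⋯ ⊗ e_{x_n}`. -/
abbrev Cn (S : Type*) (n : ℕ) := (Fin (n + 1) → S) →₀ ℂ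

/-- The Hochschild boundary map `d_n : C_{n+1}(S) → C_n(S)`, determined on basis vectors by
`d_n[x_0,…,x_{n+1}] = ∑_{j=0}^{n} (-1)^j [x_0,…,x_j·x_{j+1},…,x_{n+1}]
  + (-1)^{n+1} [x_{n+1}·x_0, x_1,…,x_n]`. -/
noncomputable def dH (S : Type*) [Monoid S] (n : ℕ) : Cn S (n + 1) →ₗ[ℂ] Cn S n :=
  Finsupp.lift (Cn S n) ℂ (Fin (n + 2) → S) fun x =>
    (∑ j : Fin (n + 1), ((-1 : ℂ) ^ (j : ℕ)) •
        Finsupp.single (Fin.contractNth j.castSucc (· * ·) x) 1)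
      + ((-1 : ℂ) ^ (n + 1)) •
        Finsupp.single
          (fun i : Fin (n + 1) => if i = 0 then x (Fin.last (n + 1)) * x 0 else x i.castSucc) 1

variable {X : Type*} [Fintype X] [DecidableEq X]

/-- The basis element `e_J` of the semigroup algebra `A = MonoidAlgebra ℂ (2^X)`
supported at `J ⊆ X`; one has `e_J * e_K = e_{J ∪ K}` and `e_∅ = 1`. -/
noncomputable def e (J : Finset X) : MonoidAlgebra ℂ (Finset X) :=
  MonoidAlgebra.single J 1

/-- `u_J = (∏_{i ∈ J} e_{{i}}) * (∏_{k ∈ X \ J} (e_∅ - e_{{k}}))`. -/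
noncomputable def u (J : Finset X) : MonoidAlgebra ℂ (Finset X) :=
  (∏ i ∈ J, e {i}) * ∏ k ∈ Jᶜ, (e ∅ - e {k})

/-- The trilinear map realising `b ⊗ c ⊗ (e_{y_1} ⊗ ⋯ ⊗ e_{y_n}) ∈ A ⊗ A ⊗ A^{⊗ n}`
as an element of `C_{n+1}(2^X) = A ⊗ A^{⊗ (n+1)}` (in the Finsupp model). -/
noncomputable def ins (n : ℕ) :
    MonoidAlgebra ℂ (Finset X) →ₗ[ℂ] MonoidAlgebra ℂ (Finset X) →ₗ[ℂ]
      ((Fin n → Finset X) →₀ ℂ) →ₗ[ℂ] ((Fin (n + 2) → Finset X) →₀ ℂ) :=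
  (Finsupp.lift (MonoidAlgebra ℂ (Finset X) →ₗ[ℂ]
        ((Fin n → Finset X) →₀ ℂ) →ₗ[ℂ] ((Fin (n + 2) → Finset X) →₀ ℂ)) ℂ (Finset X) fun K =>
    (Finsupp.lift (((Fin n → Finset X) →₀ ℂ) →ₗ[ℂ] ((Fin (n + 2) → Finset X) →₀ ℂ)) ℂ
        (Finset X) fun L =>
      Finsupp.lmapDomain ℂ ℂ fun (y : Fin n → Finset X) =>
        (Fin.cons K (Fin.cons L y : Fin (n + 1) → Finset X) : Fin (n + 2) → Finset X)) ∘ₗ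
      (MonoidAlgebra.coeffLinearEquiv ℂ).toLinearMap) ∘ₗ
    (MonoidAlgebra.coeffLinearEquiv ℂ).toLinearMap

/-- The splitting maps `s_n : C_n(2^X) → C_{n+1}(2^X)`: `s_0 = 0` and, for `n ≥ 1`,
`s_n(a_0 ⊗ a_1 ⊗ ⋯ ⊗ a_n) = ∑_{J ⊆ X} (a_0·u_J) ⊗ u_J ⊗ a_1 ⊗ ⋯ ⊗ a_n`
(defined on the basis vectors `a_i = e_{x_i}` and extended by linearity). -/
noncomputable def sMap : (n : ℕ) → Cn (Finset X) n →ₗ[ℂ] Cn (Finset X) (n + 1)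
  | 0 => 0
  | n + 1 =>
    Finsupp.lift _ ℂ (Fin (n + 2) → Finset X) fun x =>
      ∑ J : Finset X, ins (n + 1) (e (x 0) * u J) (u J)
        (Finsupp.single (fun i : Fin (n + 1) => x i.succ) 1)

/-- The ℓ¹-norm on `C_n(S)`: the sum of the absolute values of the coefficients
with respect to the canonical basis. -/
noncomputable def l1 {α : Type*} (ξ : α →₀ ℂ) : ℝ := ∑ a ∈ ξ.support, ‖ξ a‖

section l1lemmas

variable {α β : Type*}

lemma l1_nonneg (ξ : α →₀ ℂ) : 0 ≤ l1 ξ :=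
  Finset.sum_nonneg fun _ _ => norm_nonneg _

lemma l1_eq_sum {s : Finset α} (ξ : α →₀ ℂ) (h : ξ.support ⊆ s) :
    l1 ξ = ∑ a ∈ s, ‖ξ a‖ :=
  Finset.sum_subset h fun a _ ha => by
    simp [Finsupp.notMem_support_iff.mp ha]

lemma l1_add_le (ξ η : α →₀ ℂ) : l1 (ξ + η) ≤ l1 ξ + l1 η := by
  classical
  rw [l1_eq_sum (ξ + η) Finsupp.support_add,
    l1_eq_sum ξ Finset.subset_union_left, l1_eq_sum η Finset.subset_union_right,
    ← Finset.sum_add_distrib]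
  exact Finset.sum_le_sum fun a _ => by simpa using norm_add_le (ξ a) (η a)

lemma l1_smul (c : ℂ) (ξ : α →₀ ℂ) : l1 (c • ξ) = ‖c‖ * l1 ξ := by
  classical
  rw [l1_eq_sum (c • ξ) Finsupp.support_smul, l1, Finset.mul_sum]
  exact Finset.sum_congr rfl fun a _ => by simp [map_mul]

lemma l1_sum_le {ι : Type*} (s : Finset ι) (f : ι → (α →₀ ℂ)) :
    l1 (∑ i ∈ s, f i) ≤ ∑ i ∈ s, l1 (f i) := by
  classical
  induction s using Finset.induction with
  | empty => simp [l1]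
  | insert _ _ h ih =>
    rw [Finset.sum_insert h, Finset.sum_insert h]
    exact le_trans (l1_add_le _ _) (by linarith)

lemma l1_single (a : α) (c : ℂ) : l1 (Finsupp.single a c) = ‖c‖ := by
  classical
  by_cases hc : c = 0
  · simp [hc, l1]
  · simp [l1, Finsupp.support_single_ne_zero a hc]

lemma l1_opnorm (f : (α →₀ ℂ) →ₗ[ℂ] (β →₀ ℂ)) (C : ℝ)
    (h : ∀ a, l1 (f (Finsupp.single a 1)) ≤ C) (ξ : α →₀ ℂ) :
    l1 (f ξ) ≤ C * l1 ξ := by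
  classical
  have hξ : ξ = ∑ a ∈ ξ.support, (ξ a) • Finsupp.single a (1 : ℂ) := by
    conv_lhs => rw [← Finsupp.sum_single ξ]
    rw [Finsupp.sum]
    exact Finset.sum_congr rfl fun a _ => by
      rw [Finsupp.smul_single, smul_eq_mul, mul_one]
  calc l1 (f ξ) = l1 (∑ a ∈ ξ.support, (ξ a) • f (Finsupp.single a 1)) := by
        conv_lhs => rw [hξ]
        rw [map_sum]
        simp_rw [map_smul]
    _ ≤ ∑ a ∈ ξ.support, l1 ((ξ a) • f (Finsupp.single a 1)) := l1_sum_le _ _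
    _ ≤ ∑ a ∈ ξ.support, ‖ξ a‖ * C := by
        refine Finset.sum_le_sum fun a _ => ?_
        rw [l1_smul]
        exact mul_le_mul_of_nonneg_left (h a) (norm_nonneg _)
    _ = C * l1 ξ := by rw [l1, ← Finset.sum_mul, mul_comm]

end l1lemmas

lemma l1_mul_le (a b : MonoidAlgebra ℂ (Finset X)) : l1 (a * b).coeff ≤ l1 a.coeff * l1 b.coeff := by
  classical
  rw [MonoidAlgebra.mul_def, Finsupp.sum, MonoidAlgebra.coeff_sum]
  calc l1 (∑ K ∈ a.coeff.support,
          (Finsupp.sum b.coeff fun L c => MonoidAlgebra.single (K * L) (a.coeff K * c)).coeff)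
      ≤ ∑ K ∈ a.coeff.support,
          l1 (Finsupp.sum b.coeff fun L c => MonoidAlgebra.single (K * L) (a.coeff K * c)).coeff :=
        l1_sum_le _ _
    _ ≤ ∑ K ∈ a.coeff.support, ∑ L ∈ b.coeff.support, ‖a.coeff K‖ * ‖b.coeff L‖ := by
        refine Finset.sum_le_sum fun K _ => ?_
        rw [Finsupp.sum, MonoidAlgebra.coeff_sum]
        refine le_trans (l1_sum_le _ _) ?_
        refine Finset.sum_le_sum fun L _ => ?_
        rw [MonoidAlgebra.coeff_single, l1_single, norm_mul]
    _ = l1 a.coeff * l1 b.coeff := by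
        rw [l1, l1, Finset.sum_mul_sum]

lemma l1_one : l1 (1 : MonoidAlgebra ℂ (Finset X)).coeff = 1 := by
  rw [MonoidAlgebra.one_def, MonoidAlgebra.coeff_single]
  simpa using l1_single (1 : Finset X) (1 : ℂ)

lemma l1_prod_le {ι : Type*} (s : Finset ι) (f : ι → MonoidAlgebra ℂ (Finset X)) (c : ι → ℝ)
    (h : ∀ i ∈ s, l1 (f i).coeff ≤ c i) (hc : ∀ i ∈ s, 0 ≤ c i) :
    l1 (∏ i ∈ s, f i : MonoidAlgebra ℂ (Finset X)).coeff ≤ ∏ i ∈ s, c i := by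
  classical
  induction s using Finset.induction with
  | empty => simp [l1_one]
  | @insert i s hi ih =>
    rw [Finset.prod_insert hi, Finset.prod_insert hi]
    calc l1 (f i * (∏ j ∈ s, f j : MonoidAlgebra ℂ (Finset X))).coeff
        ≤ l1 (f i).coeff * l1 (∏ j ∈ s, f j : MonoidAlgebra ℂ (Finset X)).coeff := l1_mul_le _ _
      _ ≤ c i * ∏ j ∈ s, c j :=
          mul_le_mul (h i (Finset.mem_insert_self _ _))
            (ih (fun j hj => h j (Finset.mem_insert_of_mem hj))
              (fun j hj => hc j (Finset.mem_insert_of_mem hj)))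
            (l1_nonneg _) (hc i (Finset.mem_insert_self _ _))

lemma l1_e (J : Finset X) : l1 (e J).coeff = 1 := by
  rw [show (e J).coeff = Finsupp.single J (1 : ℂ) from rfl, l1_single]
  simp

lemma l1_u_le (J : Finset X) : l1 (u J).coeff ≤ 2 ^ Jᶜ.card := by
  rw [u]
  refine le_trans (l1_mul_le _ _) ?_
  have h1 : l1 (∏ i ∈ J, e {i} : MonoidAlgebra ℂ (Finset X)).coeff ≤ ∏ i ∈ J, (1 : ℝ) :=
    l1_prod_le _ _ _ (fun i _ => le_of_eq (l1_e _)) (fun _ _ => zero_le_one)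
  have h2 : l1 (∏ k ∈ Jᶜ, (e ∅ - e {k}) : MonoidAlgebra ℂ (Finset X)).coeff ≤ ∏ k ∈ Jᶜ, (2 : ℝ) := by
    refine l1_prod_le _ _ _ (fun k _ => ?_) (fun _ _ => by norm_num)
    have hdef : e (∅ : Finset X) - e {k} = e ∅ + (-1 : ℂ) • e {k} := by
      rw [neg_one_smul]; ring
    rw [hdef, MonoidAlgebra.coeff_add]
    refine le_trans (l1_add_le _ _) ?_
    rw [MonoidAlgebra.coeff_smul, l1_smul, l1_e, l1_e]
    norm_num
  calc l1 (∏ i ∈ J, e {i} : MonoidAlgebra ℂ (Finset X)).coeff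
        * l1 (∏ k ∈ Jᶜ, (e ∅ - e {k}) : MonoidAlgebra ℂ (Finset X)).coeff
      ≤ (∏ i ∈ J, (1 : ℝ)) * ∏ k ∈ Jᶜ, (2 : ℝ) :=
        mul_le_mul h1 h2 (l1_nonneg _) (by positivity)
    _ = 2 ^ Jᶜ.card := by simp [Finset.prod_const]

lemma ins_apply (n : ℕ) (a b : MonoidAlgebra ℂ (Finset X)) (y : Fin n → Finset X) :
    ins n a b (Finsupp.single y (1 : ℂ))
      = ∑ K ∈ a.coeff.support, a.coeff K •
          ∑ L ∈ b.coeff.support, b.coeff L • Finsupp.single (Fin.cons K (Fin.cons L y)) 1 := by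
  classical
  rw [ins]
  simp only [LinearMap.coe_comp, Function.comp_apply, LinearEquiv.coe_coe]
  erw [Finsupp.lift_apply]
  rw [Finsupp.sum]
  simp only [LinearMap.coe_sum, Finset.sum_apply, LinearMap.smul_apply]
  refine Finset.sum_congr rfl fun K _ => ?_
  congr 1
  erw [Finsupp.lift_apply]
  rw [Finsupp.sum]
  simp only [LinearMap.coe_sum, Finset.sum_apply, LinearMap.smul_apply,
    Finsupp.lmapDomain_apply, Finsupp.mapDomain_single]
  rfl

lemma l1_ins_le (n : ℕ) (a b : MonoidAlgebra ℂ (Finset X)) (y : Fin n → Finset X) :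
    l1 (ins n a b (Finsupp.single y (1 : ℂ))) ≤ l1 a.coeff * l1 b.coeff := by
  classical
  rw [ins_apply]
  have hK : ∀ K : Finset X,
      l1 (α := Fin (n + 2) → Finset X)
        (a.coeff K • ∑ L ∈ b.coeff.support, b.coeff L • Finsupp.single (Fin.cons K (Fin.cons L y)) (1 : ℂ))
      ≤ ‖a.coeff K‖ * l1 b.coeff := by
    intro K
    rw [l1_smul]
    refine mul_le_mul_of_nonneg_left ?_ (norm_nonneg _)
    refine le_trans (l1_sum_le _ _) ?_
    refine le_trans (Finset.sum_le_sum (g := fun L => ‖b.coeff L‖)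
      fun L _ => ?_) (le_of_eq rfl)
    rw [l1_smul, l1_single]
    simp
  refine le_trans (l1_sum_le _ _) ?_
  refine le_trans (Finset.sum_le_sum (g := fun K => ‖a.coeff K‖ * l1 b.coeff)
    fun K _ => hK K) ?_
  rw [← Finset.sum_mul]
  exact le_of_eq rfl

lemma sMap_single (n : ℕ) (x : Fin (n + 2) → Finset X) :
    sMap (n + 1) (Finsupp.single x (1 : ℂ))
      = ∑ J : Finset X, ins (n + 1) (e (x 0) * u J) (u J)
          (Finsupp.single (fun i : Fin (n + 1) => x i.succ) 1) := by
  have hs : sMap (X := X) (n + 1)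
      = Finsupp.lift _ ℂ (Fin (n + 2) → Finset X) (fun x =>
          ∑ J : Finset X, ins (n + 1) (e (x 0) * u J) (u J)
            (Finsupp.single (fun i : Fin (n + 1) => x i.succ) 1)) := rfl
  rw [hs, Finsupp.lift_apply, Finsupp.sum_single_index (by simp), one_smul]

lemma sum_bound : ∑ J : Finset X, ((2 : ℝ) ^ Jᶜ.card * 2 ^ Jᶜ.card)
    ≤ 5 ^ Fintype.card X := by
  have h1 : ∀ J : Finset X, (2 : ℝ) ^ Jᶜ.card * 2 ^ Jᶜ.card = 4 ^ Jᶜ.card := by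
    intro J; rw [← mul_pow]; norm_num
  simp_rw [h1]
  have h2 : ∑ J : Finset X, (4 : ℝ) ^ Jᶜ.card = ∑ J : Finset X, (4 : ℝ) ^ J.card :=
    Fintype.sum_bijective compl (Function.Involutive.bijective compl_compl)
      _ _ (fun _ => rfl)
  rw [h2]
  have h3 : ∑ J : Finset X, (4 : ℝ) ^ J.card
      = ∑ t ∈ (Finset.univ : Finset X).powerset, (4 : ℝ) ^ t.card := by
    rw [Finset.powerset_univ]
  rw [h3]
  have h4 := Finset.prod_add (fun _ : X => (4 : ℝ)) (fun _ : X => (1 : ℝ)) Finset.univ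
  have h5 : ∑ t ∈ (Finset.univ : Finset X).powerset, (4 : ℝ) ^ t.card
      = ∏ _i : X, ((4 : ℝ) + 1) := by
    rw [h4]
    exact Finset.sum_congr rfl fun t _ => by simp [Finset.prod_const]
  rw [h5]
  rw [Finset.prod_const]
  norm_num

/-- The ℓ¹-operator bound `‖s_n(ξ)‖₁ ≤ 5^{|X|}·‖ξ‖₁` for every `n ≥ 0` and
every `ξ ∈ C_n(2^X)`. -/
theorem l1_sMap_le (X : Type*) [Fintype X] [DecidableEq X] (n : ℕ) (ξ : Cn (Finset X) n) :
    l1 (sMap n ξ) ≤ 5 ^ (Fintype.card X) * l1 ξ := by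
  match n with
  | 0 =>
    have h0 : sMap (X := X) 0 = 0 := rfl
    rw [h0, LinearMap.zero_apply]
    have hz : l1 (0 : Cn (Finset X) 1) = 0 := by simp [l1]
    rw [hz]
    exact mul_nonneg (by positivity) (l1_nonneg ξ)
  | n + 1 =>
    refine l1_opnorm (sMap (n + 1)) (5 ^ Fintype.card X) (fun x => ?_) ξ
    rw [sMap_single]
    calc l1 (∑ J : Finset X, ins (n + 1) (e (x 0) * u J) (u J)
            (Finsupp.single (fun i : Fin (n + 1) => x i.succ) 1))
        ≤ ∑ J : Finset X, l1 (ins (n + 1) (e (x 0) * u J) (u J)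
            (Finsupp.single (fun i : Fin (n + 1) => x i.succ) 1)) := l1_sum_le _ _
      _ ≤ ∑ J : Finset X, ((2 : ℝ) ^ Jᶜ.card * 2 ^ Jᶜ.card) := by
          refine Finset.sum_le_sum fun J _ => ?_
          refine le_trans (l1_ins_le _ _ _ _) ?_
          refine mul_le_mul ?_ (l1_u_le J) (l1_nonneg _) (by positivity)
          calc l1 (e (x 0) * u J).coeff ≤ l1 (e (x 0)).coeff * l1 (u J).coeff := l1_mul_le _ _
            _ ≤ 1 * 2 ^ Jᶜ.card := by
                refine mul_le_mul ?_ (l1_u_le J) (l1_nonneg _) zero_le_one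
                simp [e, l1_single]
            _ = 2 ^ Jᶜ.card := one_mul _
      _ ≤ 5 ^ Fintype.card X := sum_bound
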